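/- Let P be a finite poset with unique minimum 0̂, V a finite-dimensional vector space, and {V_x : x ∈ P} a P-filtration of V (i.e., V_x ⊆ V for each x, V_y ⊆ V_x whenever x ≤ y, and V_{0̂} = V). Define V_{>x} = Σ_{y > x} V_y and V_{=x} = V_x / V_{>x}. Then dim V ≤ Σ_{x ∈ P} dim V_{=x}. -/

import Mathlib

/-- if `{V_x : x ∈ P}` is a `P`-filtration of a finite-dimensional
vector space `V` (so `V_y ⊆ V_x` for `x ≤ y` and `V_{0̂} = V`), then
`dim V ≤ Σ_{x ∈ P} dim (V_x / Σ_{y > x} V_y)`. -/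
theorem P_filtration_dim_bound {F V P : Type*} [Field F] [AddCommGroup V]
    [Module F V] [FiniteDimensional F V] [Fintype P] [PartialOrder P] [OrderBot P]
    (filt : P → Submodule F V)
    (hanti : ∀ x y : P, x ≤ y → filt y ≤ filt x)
    (hbot : filt ⊥ = ⊤) :
    Module.finrank F V ≤ ∑ x : P, Module.finrank F
      ((filt x) ⧸ (Submodule.comap (filt x).subtype (⨆ y ∈ {y : P | x < y}, filt y))) := by
  set d : P → ℕ := fun x => Module.finrank F
      ((filt x) ⧸ (Submodule.comap (filt x).subtype (⨆ y ∈ {y : P | x < y}, filt y))) with hd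
  suffices h : ∀ s : Finset P, (∀ x ∈ s, ∀ y, x < y → y ∈ s) →
      Module.finrank F (s.sup filt : Submodule F V) ≤ ∑ x ∈ s, d x by
    have h1 := h Finset.univ (by simp)
    have htop : (Finset.univ.sup filt : Submodule F V) = ⊤ :=
      top_le_iff.mp (hbot ▸ Finset.le_sup (Finset.mem_univ (⊥ : P)))
    rw [htop, finrank_top] at h1
    simpa using h1
  classical
  intro s
  induction s using Finset.strongInductionOn with
  | _ s ih =>
    intro hup
    rcases s.eq_empty_or_nonempty with rfl | hne
    · simp
    obtain ⟨x, hxs, hmin⟩ := s.exists_minimal hne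
    set s' := s.erase x with hs'def
    have hs' : s' ⊂ s := Finset.erase_ssubset hxs
    have hup' : ∀ a ∈ s', ∀ y, a < y → y ∈ s' := by
      intro a ha y hay
      have has : a ∈ s := Finset.mem_of_mem_erase ha
      have hys : y ∈ s := hup a has y hay
      refine Finset.mem_erase.mpr ⟨?_, hys⟩
      rintro rfl
      exact absurd (hmin has hay.le) (not_le_of_gt hay)
    have IH := ih s' hs' hup'
    set W : Submodule F V := ⨆ y ∈ {y : P | x < y}, filt y with hW
    have hWle : W ≤ (s'.sup filt : Submodule F V) := by
      refine iSup₂_le fun y hy => ?_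
      have hys : y ∈ s := hup x hxs y hy
      exact Finset.le_sup (Finset.mem_erase.mpr ⟨(ne_of_gt hy), hys⟩)
    have hsup : (s.sup filt : Submodule F V) = filt x ⊔ s'.sup filt := by
      conv_lhs => rw [← Finset.insert_erase hxs]
      rw [Finset.sup_insert]
    have hquot : d x + Module.finrank F (Submodule.comap (filt x).subtype W)
        = Module.finrank F (filt x) := Submodule.finrank_quotient_add_finrank _
    have hcomap : Module.finrank F (Submodule.comap (filt x).subtype W)
        = Module.finrank F (filt x ⊓ W : Submodule F V) := by
      rw [show Submodule.comap (filt x).subtype W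
          = Submodule.comap (filt x).subtype (filt x ⊓ W) by
        rw [Submodule.comap_inf, Submodule.comap_subtype_self, top_inf_eq]]
      exact (Submodule.comapSubtypeEquivOfLe inf_le_left).finrank_eq
    have hmono : Module.finrank F (filt x ⊓ W : Submodule F V)
        ≤ Module.finrank F (filt x ⊓ s'.sup filt : Submodule F V) :=
      Submodule.finrank_mono (inf_le_inf_left _ hWle)
    have hsr : Module.finrank F (filt x ⊔ s'.sup filt : Submodule F V)
        + Module.finrank F (filt x ⊓ s'.sup filt : Submodule F V)
        = Module.finrank F (filt x) + Module.finrank F (s'.sup filt : Submodule F V) :=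
      Submodule.finrank_sup_add_finrank_inf_eq _ _
    have hsum : d x + ∑ y ∈ s', d y = ∑ y ∈ s, d y := Finset.add_sum_erase s d hxs
    rw [hsup]
    omega
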